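/- Let d ≥ 3 be an integer and let f ∈ C[x,y,z] be given by f = x^{2m} + (xz + y^2)^m if d = 2m is even (m ≥ 2) and by f = x·(x^{2m} + (xz + y^2)^m) if d = 2m + 1 is odd (m ≥ 1). Then the S-module AR(f) of Jacobian syzygies of f is a free S-module of rank 2, admitting a basis consisting of two homogeneous syzygies, one of degree 1 and one of degree d − 2. -/

import Mathlib

open MvPolynomial

/-- The Jacobian map sending a triple `(a,b,c)` to `a·f_x + b·f_y + c·f_z`. -/
noncomputable def jacMap (f : MvPolynomial (Fin 3) ℂ) :
    (Fin 3 → MvPolynomial (Fin 3) ℂ) →ₗ[MvPolynomial (Fin 3) ℂ] MvPolynomial (Fin 3) ℂ where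
  toFun v := ∑ i, v i * pderiv i f
  map_add' a b := by simp [add_mul, Finset.sum_add_distrib]
  map_smul' c a := by simp [Finset.mul_sum, mul_assoc]

/-- The module of Jacobian syzygies `AR(f)`. -/
noncomputable def AR (f : MvPolynomial (Fin 3) ℂ) :
    Submodule (MvPolynomial (Fin 3) ℂ) (Fin 3 → MvPolynomial (Fin 3) ℂ) :=
  LinearMap.ker (jacMap f)

local notation "S3" => MvPolynomial (Fin 3) ℂ

lemma primeX {n : ℕ} (i : Fin (n+1)) : Prime (X i : MvPolynomial (Fin (n+1)) ℂ) := by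
  rw [← MulEquiv.prime_iff ((renameEquiv ℂ (Equiv.swap i 0)).trans
      (finSuccEquiv ℂ n)).toRingEquiv.toMulEquiv]
  have h : ((renameEquiv ℂ (Equiv.swap i 0)).trans (finSuccEquiv ℂ n)).toRingEquiv.toMulEquiv (X i)
      = Polynomial.X := by
    show ((renameEquiv ℂ (Equiv.swap i 0)).trans (finSuccEquiv ℂ n)) (X i) = Polynomial.X
    rw [AlgEquiv.trans_apply, renameEquiv_apply, rename_X, Equiv.swap_apply_left,
      finSuccEquiv_X_zero]
  rw [h]
  exact Polynomial.prime_X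

lemma not_dvd_of_eval {σ : Type*} {p g : MvPolynomial σ ℂ} (pt : σ → ℂ) (hp : eval pt p = 0)
    (hg : eval pt g ≠ 0) : ¬ p ∣ g := by
  rintro ⟨c, rfl⟩
  exact hg (by rw [map_mul, hp, zero_mul])

set_option maxRecDepth 4000 in
set_option synthInstance.maxHeartbeats 1000000 in
set_option maxHeartbeats 1000000 in
lemma prime_q : Prime (X 0 * X 2 + X 1 ^ 2 : S3) := by
  rw [← MulEquiv.prime_iff (finSuccEquiv ℂ 2).toRingEquiv.toMulEquiv]
  have h : (finSuccEquiv ℂ 2).toRingEquiv.toMulEquiv (X 0 * X 2 + X 1 ^ 2 : S3)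
      = Polynomial.X * Polynomial.C (X 1) + Polynomial.C (X 0) ^ 2 := by
    show (finSuccEquiv ℂ 2) (X 0 * X 2 + X 1 ^ 2 : S3) = _
    rw [map_add, map_mul, map_pow, finSuccEquiv_X_zero,
      show (2 : Fin 3) = Fin.succ 1 from rfl, show (1 : Fin 3) = Fin.succ 0 from rfl,
      finSuccEquiv_X_succ, finSuccEquiv_X_succ]
  rw [h]
  have hc1 : (Polynomial.X * Polynomial.C (X 1) + Polynomial.C (X 0) ^ 2
      : Polynomial (MvPolynomial (Fin 2) ℂ)).coeff 1 = X 1 := by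
    rw [Polynomial.coeff_add, ← Polynomial.C_pow, Polynomial.coeff_C, mul_comm,
      Polynomial.coeff_C_mul, Polynomial.coeff_X_one]
    simp
  have hc0 : (Polynomial.X * Polynomial.C (X 1) + Polynomial.C (X 0) ^ 2
      : Polynomial (MvPolynomial (Fin 2) ℂ)).coeff 0 = X 0 ^ 2 := by
    rw [Polynomial.coeff_add, ← Polynomial.C_pow, Polynomial.coeff_C, mul_comm,
      Polynomial.coeff_C_mul, Polynomial.coeff_X_zero]
    simp
  have hprim : (Polynomial.X * Polynomial.C (X 1) + Polynomial.C (X 0) ^ 2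
      : Polynomial (MvPolynomial (Fin 2) ℂ)).IsPrimitive := by
    intro r hr
    rw [Polynomial.C_dvd_iff_dvd_coeff] at hr
    have hr1 : r ∣ X 1 := hc1 ▸ hr 1
    have hr0 : r ∣ X 0 ^ 2 := hc0 ▸ hr 0
    obtain ⟨s, hs⟩ := hr1
    rcases (primeX (1 : Fin 2)).2.2 r s (hs ▸ dvd_refl _) with h1 | h1
    · exfalso
      refine not_dvd_of_eval (p := (X 1 : MvPolynomial (Fin 2) ℂ)) ![1, 0] (by simp)
        (g := X 0 ^ 2) (by simp) (h1.trans hr0)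
    · obtain ⟨u, hu⟩ := h1
      have h2 : X 1 * 1 = X 1 * (r * u) := by rw [mul_one]; nth_rewrite 1 [hs, hu]; ring
      exact IsUnit.of_mul_eq_one (a := r) u (mul_left_cancel₀ (X_ne_zero _) h2).symm
  have hinj := IsFractionRing.injective (MvPolynomial (Fin 2) ℂ)
      (FractionRing (MvPolynomial (Fin 2) ℂ))
  have hmapirr : Irreducible ((Polynomial.X * Polynomial.C (X 1) + Polynomial.C (X 0) ^ 2
      : Polynomial (MvPolynomial (Fin 2) ℂ)).map
      (algebraMap _ (FractionRing (MvPolynomial (Fin 2) ℂ)))) := by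
    apply Polynomial.irreducible_of_degree_eq_one
    rw [Polynomial.map_add, Polynomial.map_mul, Polynomial.map_pow, Polynomial.map_C,
      Polynomial.map_C, Polynomial.map_X, ← Polynomial.C_pow, ← map_pow,
      mul_comm (Polynomial.X : Polynomial (FractionRing (MvPolynomial (Fin 2) ℂ)))]
    apply Polynomial.degree_linear
    simp only [ne_eq, map_eq_zero_iff _ hinj]
    exact X_ne_zero _
  exact (UniqueFactorizationMonoid.irreducible_iff_prime).mp
    (hprim.irreducible_of_irreducible_map_of_injective hinj hmapirr)


lemma mem_AR_iff {f : S3} {v : Fin 3 → S3} :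
    v ∈ AR f ↔ v 0 * pderiv 0 f + v 1 * pderiv 1 f + v 2 * pderiv 2 f = 0 := by
  rw [AR, LinearMap.mem_ker]
  show (∑ i, v i * pderiv i f) = 0 ↔ _
  rw [Fin.sum_univ_three]

lemma basis_of_pair {f : S3} (r1 r2 : Fin 3 → S3) (h1 : r1 ∈ AR f) (h2 : r2 ∈ AR f)
    (hr10 : r1 0 = 0) (hr11 : r1 1 = X 0) (hr20 : r2 0 ≠ 0)
    (hspan : ∀ v : Fin 3 → S3, v ∈ AR f → ∃ t A : S3, v = t • r1 + A • r2) :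
    ∃ B : Module.Basis (Fin 2) S3 (AR f), (B 0 : Fin 3 → S3) = r1 ∧ (B 1 : Fin 3 → S3) = r2 := by
  set w : Fin 2 → AR f := ![⟨r1, h1⟩, ⟨r2, h2⟩] with hw
  have hindep : LinearIndependent S3 w := by
    rw [Fintype.linearIndependent_iff]
    intro g hg
    have hg' : g 0 • r1 + g 1 • r2 = 0 := by
      have := congrArg (Subtype.val) (Fin.sum_univ_two (fun i => g i • w i) ▸ hg)
      simpa [hw] using this
    have h0 := congrFun hg' 0
    have hg1 : g 1 = 0 := by
      simp only [Pi.add_apply, Pi.smul_apply, smul_eq_mul, hr10, mul_zero, zero_add,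
        Pi.zero_apply] at h0
      rcases mul_eq_zero.mp h0 with h | h
      · exact h
      · exact absurd h hr20
    have h1' := congrFun hg' 1
    simp only [Pi.add_apply, Pi.smul_apply, smul_eq_mul, hr11, hg1, zero_mul, add_zero,
      Pi.zero_apply] at h1'
    have hg0 : g 0 = 0 := by
      rcases mul_eq_zero.mp h1' with h | h
      · exact h
      · exact absurd h (X_ne_zero 0)
    intro i
    fin_cases i <;> assumption
  have hsp : ⊤ ≤ Submodule.span S3 (Set.range w) := by
    intro u _
    obtain ⟨t, A, huv⟩ := hspan u.1 u.2
    have : u = t • w 0 + A • w 1 := by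
      apply Subtype.ext
      rw [huv]
      rfl
    rw [this]
    exact Submodule.add_mem _
      (Submodule.smul_mem _ _ (Submodule.subset_span ⟨0, rfl⟩))
      (Submodule.smul_mem _ _ (Submodule.subset_span ⟨1, rfl⟩))
  refine ⟨Module.Basis.mk hindep hsp, ?_, ?_⟩
  · rw [Module.Basis.mk_apply]; rfl
  · rw [Module.Basis.mk_apply]; rfl

lemma cast_eq_C (n : ℕ) : ((n : ℕ) : S3) = C ((n : ℕ) : ℂ) := by
  rw [map_natCast]

lemma two_eq_C : (2 : S3) = C (2 : ℂ) := by
  have := map_ofNat (C : ℂ →+* S3) 2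
  exact this.symm

lemma four_eq_C : (4 : S3) = C (4 : ℂ) := by
  have := map_ofNat (C : ℂ →+* S3) 4
  exact this.symm

lemma h2c' : (C (1/2 : ℂ) * 2 : S3) = 1 := by
  rw [two_eq_C, ← C_mul]
  norm_num

lemma even_case (k : ℕ) :
    ∃ B : Module.Basis (Fin 2) (MvPolynomial (Fin 3) ℂ)
      (AR (X 0 ^ (2*k+4) + (X 0 * X 2 + X 1 ^ 2) ^ (k+2))),
      (∀ i, ((B 0).1 i).IsHomogeneous 1) ∧ (∀ i, ((B 1).1 i).IsHomogeneous (2*k+2)) := by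
  set SS : S3 := ∑ i ∈ Finset.range (k+1),
    (X 0 * X 2 + X 1 ^ 2) ^ i * ((X 1:S3) ^ 2) ^ (k - i) with hSSdef
  have hgeom : SS * (X 0 * X 2) = (X 0 * X 2 + X 1 ^ 2)^(k+1) - ((X 1:S3)^2)^(k+1) := by
    have h := geom_sum₂_mul (X 0 * X 2 + X 1 ^ 2 : S3) ((X 1:S3)^2) (k+1)
    simp only [Nat.add_sub_cancel] at h
    linear_combination h
  have pd0 : pderiv 0 (X 0 ^ (2*k+4) + (X 0 * X 2 + X 1 ^ 2) ^ (k+2) : S3)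
      = ((2*k+4 : ℕ) : S3) * X 0 ^ (2*k+3)
        + ((k+2 : ℕ) : S3) * (X 0 * X 2 + X 1 ^ 2)^(k+1) * X 2 := by
    simp [pderiv_pow, pderiv_mul]; ring
  have pd1 : pderiv 1 (X 0 ^ (2*k+4) + (X 0 * X 2 + X 1 ^ 2) ^ (k+2) : S3)
      = ((k+2 : ℕ) : S3) * (X 0 * X 2 + X 1 ^ 2)^(k+1) * (2 * X 1) := by
    simp [pderiv_pow, pderiv_mul]; ring
  have pd2 : pderiv 2 (X 0 ^ (2*k+4) + (X 0 * X 2 + X 1 ^ 2) ^ (k+2) : S3)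
      = ((k+2 : ℕ) : S3) * (X 0 * X 2 + X 1 ^ 2)^(k+1) * X 0 := by
    simp [pderiv_pow, pderiv_mul]; ring
  -- the two syzygies
  have h1 : (![0, X 0, -(2 * X 1)] : Fin 3 → S3)
      ∈ AR (X 0 ^ (2*k+4) + (X 0 * X 2 + X 1 ^ 2) ^ (k+2)) := by
    rw [mem_AR_iff, pd0, pd1, pd2]
    show (0:S3) * _ + X 0 * _ + -(2 * X 1) * _ = 0
    ring
  have h2 : (![2 * (X 0 * X 2 + X 1 ^ 2)^(k+1), -(X 2 * X 1 ^ (2*k+1)),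
      -(4 * X 0 ^ (2*k+2) + 2 * X 2^2 * SS)] : Fin 3 → S3)
      ∈ AR (X 0 ^ (2*k+4) + (X 0 * X 2 + X 1 ^ 2) ^ (k+2)) := by
    rw [mem_AR_iff, pd0, pd1, pd2]
    show 2 * (X 0 * X 2 + X 1 ^ 2)^(k+1) * _ + -(X 2 * X 1 ^ (2*k+1)) * _
      + -(4 * X 0 ^ (2*k+2) + 2 * X 2^2 * SS) * _ = 0
    linear_combination (norm := (push_cast; ring1))
      (-(2*((k:S3)+2) * X 2 * (X 0 * X 2 + X 1 ^ 2)^(k+1))) * hgeom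
  
  have hq2 : IsHomogeneous (X 0 * X 2 + X 1 ^ 2 : S3) 2 :=
    ((isHomogeneous_X _ _).mul (isHomogeneous_X _ _)).add ((isHomogeneous_X _ _).pow 2)
  have hSSh : IsHomogeneous SS (2*k) := by
    rw [hSSdef]
    apply IsHomogeneous.sum
    intro i hi
    have hik : i ≤ k := by have := Finset.mem_range.mp hi; omega
    have e : 2*i + 1*2*(k-i) = 2*k := by omega
    exact e ▸ ((hq2.pow i).mul (((isHomogeneous_X _ _).pow 2).pow (k-i)))
  have hspan : ∀ v : Fin 3 → S3,
      v ∈ AR (X 0 ^ (2*k+4) + (X 0 * X 2 + X 1 ^ 2) ^ (k+2)) →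
      ∃ t A : S3, v = t • (![0, X 0, -(2 * X 1)] : Fin 3 → S3)
        + A • (![2 * (X 0 * X 2 + X 1 ^ 2)^(k+1), -(X 2 * X 1 ^ (2*k+1)),
            -(4 * X 0 ^ (2*k+2) + 2 * X 2^2 * SS)] : Fin 3 → S3) := by
    intro v hv
    rw [mem_AR_iff, pd0, pd1, pd2] at hv
    have hdvd : (X 0 * X 2 + X 1 ^ 2 : S3)^(k+1) ∣ (((2*k+4:ℕ):S3) * X 0^(2*k+3)) * v 0 :=
      ⟨-(((k+2:ℕ):S3) * (v 0 * X 2 + 2 * v 1 * X 1 + v 2 * X 0)), by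
        linear_combination (norm := (push_cast; ring1)) hv⟩
    have hnd : ¬ ((X 0 * X 2 + X 1 ^ 2 : S3) ∣ ((2*k+4:ℕ):S3) * X 0^(2*k+3)) := by
      apply not_dvd_of_eval ![1,0,0]
      · simp
      · simp only [map_mul, map_natCast, map_pow, eval_X]
        simp only [Matrix.cons_val_zero, one_pow, mul_one]
        exact Nat.cast_ne_zero.mpr (by omega)
    obtain ⟨A, hA⟩ := prime_q.pow_dvd_of_dvd_mul_left (k+1) hnd hdvd
    rw [hA] at hv
    have hE0 : (((2*k+4:ℕ):S3)*A*X 0^(2*k+3)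
        + ((k+2:ℕ):S3)*(A*X 2*(X 0*X 2+X 1^2)^(k+1) + 2*X 1*(v 1) + X 0*(v 2))) = 0 := by
      rcases mul_eq_zero.mp (show ((X 0 * X 2 + X 1 ^ 2 : S3)^(k+1)) *
        (((2*k+4:ℕ):S3)*A*X 0^(2*k+3)
          + ((k+2:ℕ):S3)*(A*X 2*(X 0*X 2+X 1^2)^(k+1) + 2*X 1*(v 1) + X 0*(v 2))) = 0 from by
            linear_combination (norm := (push_cast; ring1)) hv) with h | h
      · exact absurd h (pow_ne_zero _ prime_q.ne_zero)
      · exact h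
    have hkne : ((k+2:ℕ):S3) ≠ 0 := Nat.cast_ne_zero.mpr (by omega)
    set w1 : S3 := v 1 + C (1/2:ℂ)*A*(X 2*X 1^(2*k+1)) with hw1def
    set w2 : S3 := v 2 + C (1/2:ℂ)*A*(4*X 0^(2*k+2)+2*X 2^2*SS) with hw2def
    have hw : ((k+2:ℕ):S3) * (2*X 1*w1 + X 0*w2) = 0 := by
      rw [hw1def, hw2def]
      linear_combination (norm := (push_cast; ring1)) hE0
        + (((k:S3)+2)*A*(X 2*X 1^(2*k+2) + 2*X 0^(2*k+3) + X 0*X 2^2*SS)) * h2c'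
        + (((k:S3)+2)*A*X 2) * hgeom
    have hw0 : 2*X 1*w1 + X 0*w2 = 0 := by
      rcases mul_eq_zero.mp hw with h | h
      · exact absurd h hkne
      · exact h
    have hxd : (X 0:S3) ∣ (2*X 1) * w1 := ⟨-w2, by linear_combination hw0⟩
    rcases (primeX 0).2.2 _ _ hxd with h | h
    · exact absurd (h : (X 0:S3) ∣ 2*X 1) (by
        apply not_dvd_of_eval ![0,1,0]
        · simp
        · simp)
    obtain ⟨t, ht⟩ := h
    have hw2 : w2 = -(2*X 1*t) := by
      rcases mul_eq_zero.mp (show (X 0:S3) * (w2 + 2*X 1*t) = 0 from by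
        linear_combination hw0 - 2*X 1*ht) with h | h
      · exact absurd h (X_ne_zero 0)
      · linear_combination h
    refine ⟨t, C (1/2:ℂ) * A, ?_⟩
    funext i
    fin_cases i
    · show v 0 = t * 0 + C (1/2:ℂ)*A*(2*(X 0*X 2+X 1^2)^(k+1))
      linear_combination hA - (X 0*X 2+X 1^2)^(k+1)*A*h2c'
    · show v 1 = t * X 0 + C (1/2:ℂ)*A*(-(X 2*X 1^(2*k+1)))
      linear_combination ht - hw1def
    · show v 2 = t * (-(2*X 1)) + C (1/2:ℂ)*A*(-(4*X 0^(2*k+2)+2*X 2^2*SS))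
      linear_combination hw2 - hw2def
  obtain ⟨B, hB0, hB1⟩ := basis_of_pair _ _ h1 h2 rfl rfl
    (mul_ne_zero two_ne_zero (pow_ne_zero _ prime_q.ne_zero)) hspan
  refine ⟨B, ?_, ?_⟩
  · intro i
    rw [hB0]
    fin_cases i
    · exact isHomogeneous_zero _ _ _
    · exact isHomogeneous_X _ _
    · show IsHomogeneous (-(2 * X 1) : S3) 1
      rw [two_eq_C]
      exact ((isHomogeneous_X ℂ (1 : Fin 3)).C_mul (2:ℂ)).neg
  · intro i
    rw [hB1]
    fin_cases i
    · show IsHomogeneous (2 * (X 0 * X 2 + X 1 ^ 2)^(k+1) : S3) (2*k+2)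
      rw [two_eq_C]
      have e : 2*(k+1) = 2*k+2 := by omega
      exact (e ▸ (hq2.pow (k+1))).C_mul (2:ℂ)
    · show IsHomogeneous (-(X 2 * X 1 ^ (2*k+1)) : S3) (2*k+2)
      have e : 1 + 1*(2*k+1) = 2*k+2 := by omega
      exact (e ▸ ((isHomogeneous_X _ _).mul ((isHomogeneous_X _ _).pow (2*k+1)))).neg
    · show IsHomogeneous (-(4 * X 0 ^ (2*k+2) + 2 * X 2^2 * SS) : S3) (2*k+2)
      rw [four_eq_C, two_eq_C]
      have ha : IsHomogeneous (C (4:ℂ) * X 0 ^ (2*k+2) : S3) (1*(2*k+2)) :=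
        ((isHomogeneous_X ℂ (0 : Fin 3)).pow (2*k+2)).C_mul (4:ℂ)
      rw [one_mul] at ha
      have hb : IsHomogeneous (C (2:ℂ) * X 2 ^ 2 * SS : S3) (1*2 + 2*k) :=
        (((isHomogeneous_X ℂ (2 : Fin 3)).pow 2).C_mul (2:ℂ)).mul hSSh
      rw [show 1*2 + 2*k = 2*k+2 from by omega] at hb
      exact (ha.add hb).neg

set_option maxHeartbeats 2000000 in
lemma odd_case (k : ℕ) :
    ∃ B : Module.Basis (Fin 2) (MvPolynomial (Fin 3) ℂ)
      (AR (X 0 * (X 0 ^ (2*k+2) + (X 0 * X 2 + X 1 ^ 2) ^ (k+1)))),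
      (∀ i, ((B 0).1 i).IsHomogeneous 1) ∧ (∀ i, ((B 1).1 i).IsHomogeneous (2*k+1)) := by
  set SS : S3 := ∑ i ∈ Finset.range (k+1),
    (X 0 * X 2 + X 1 ^ 2) ^ i * ((X 1:S3) ^ 2) ^ (k - i) with hSSdef
  have hgeom : SS * (X 0 * X 2) = (X 0 * X 2 + X 1 ^ 2)^(k+1) - ((X 1:S3)^2)^(k+1) := by
    have h := geom_sum₂_mul (X 0 * X 2 + X 1 ^ 2 : S3) ((X 1:S3)^2) (k+1)
    simp only [Nat.add_sub_cancel] at h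
    linear_combination h
  have h2ck : C (1/(2*(k:ℂ)+2)) * (((2*k+2 : ℕ)) : S3) = 1 := by
    have hC : (((2*k+2:ℕ)) : S3) = C (2*(k:ℂ)+2) := by
      push_cast
      simp [map_add, map_mul, map_ofNat, map_natCast]
    have hne : (2*(k:ℂ)+2) ≠ 0 := by
      have h' : ((2*k+2:ℕ):ℂ) ≠ 0 := Nat.cast_ne_zero.mpr (by omega)
      push_cast at h'
      exact h' 
    rw [hC, ← C_mul, show (1/(2*(k:ℂ)+2)) * (2*(k:ℂ)+2) = 1 from by field_simp]
    exact C_1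
  have pd0 : pderiv 0 (X 0 * (X 0 ^ (2*k+2) + (X 0 * X 2 + X 1 ^ 2) ^ (k+1)) : S3)
      = ((2*k+3 : ℕ) : S3) * X 0 ^ (2*k+2) + (X 0 * X 2 + X 1 ^ 2)^(k+1)
        + ((k+1 : ℕ) : S3) * (X 0 * X 2 + X 1 ^ 2)^k * X 2 * X 0 := by
    simp [pderiv_pow, pderiv_mul]
    ring
  have pd1 : pderiv 1 (X 0 * (X 0 ^ (2*k+2) + (X 0 * X 2 + X 1 ^ 2) ^ (k+1)) : S3)
      = ((k+1 : ℕ) : S3) * (X 0 * X 2 + X 1 ^ 2)^k * (2 * X 1) * X 0 := by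
    simp [pderiv_pow, pderiv_mul]
    ring
  have pd2 : pderiv 2 (X 0 * (X 0 ^ (2*k+2) + (X 0 * X 2 + X 1 ^ 2) ^ (k+1)) : S3)
      = ((k+1 : ℕ) : S3) * (X 0 * X 2 + X 1 ^ 2)^k * X 0 ^ 2 := by
    simp [pderiv_pow, pderiv_mul]
    ring
  have h1 : (![0, X 0, -(2 * X 1)] : Fin 3 → S3)
      ∈ AR (X 0 * (X 0 ^ (2*k+2) + (X 0 * X 2 + X 1 ^ 2) ^ (k+1))) := by
    rw [mem_AR_iff, pd0, pd1, pd2]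
    show (0:S3) * _ + X 0 * _ + -(2 * X 1) * _ = 0
    ring
  have h2 : (![((2*k+2 : ℕ) : S3) * X 0 * (X 0 * X 2 + X 1 ^ 2)^k, -(X 1 ^ (2*k+1)),
      -(((4*k+6 : ℕ) : S3) * X 0 ^ (2*k+1) + 2 * X 2 * SS
        + ((2*k+2 : ℕ) : S3) * X 2 * (X 0 * X 2 + X 1 ^ 2)^k)] : Fin 3 → S3)
      ∈ AR (X 0 * (X 0 ^ (2*k+2) + (X 0 * X 2 + X 1 ^ 2) ^ (k+1))) := by
    rw [mem_AR_iff, pd0, pd1, pd2]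
    show ((2*k+2 : ℕ) : S3) * X 0 * (X 0 * X 2 + X 1 ^ 2)^k * _ + -(X 1 ^ (2*k+1)) * _
      + -(((4*k+6 : ℕ) : S3) * X 0 ^ (2*k+1) + 2 * X 2 * SS
        + ((2*k+2 : ℕ) : S3) * X 2 * (X 0 * X 2 + X 1 ^ 2)^k) * _ = 0
    linear_combination (norm := (push_cast; ring1))
      (-(2*((k:S3)+1) * X 0 * (X 0 * X 2 + X 1 ^ 2)^k)) * hgeom
  have hq2 : IsHomogeneous (X 0 * X 2 + X 1 ^ 2 : S3) 2 :=
    ((isHomogeneous_X _ _).mul (isHomogeneous_X _ _)).add ((isHomogeneous_X _ _).pow 2)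
  have hSSh : IsHomogeneous SS (2*k) := by
    rw [hSSdef]
    apply IsHomogeneous.sum
    intro i hi
    have hik : i ≤ k := by have := Finset.mem_range.mp hi; omega
    have e : 2*i + 1*2*(k-i) = 2*k := by omega
    exact e ▸ ((hq2.pow i).mul (((isHomogeneous_X _ _).pow 2).pow (k-i)))
  have hspan : ∀ v : Fin 3 → S3,
      v ∈ AR (X 0 * (X 0 ^ (2*k+2) + (X 0 * X 2 + X 1 ^ 2) ^ (k+1))) →
      ∃ t A : S3, v = t • (![0, X 0, -(2 * X 1)] : Fin 3 → S3)
        + A • (![((2*k+2 : ℕ) : S3) * X 0 * (X 0 * X 2 + X 1 ^ 2)^k, -(X 1 ^ (2*k+1)),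
            -(((4*k+6 : ℕ) : S3) * X 0 ^ (2*k+1) + 2 * X 2 * SS
              + ((2*k+2 : ℕ) : S3) * X 2 * (X 0 * X 2 + X 1 ^ 2)^k)] : Fin 3 → S3) := by
    intro v hv
    rw [mem_AR_iff, pd0, pd1, pd2] at hv
    -- step 1 : X 0 divides v 0
    have hxdvd : (X 0 : S3) ∣ (((2*k+3:ℕ):S3) * X 0^(2*k+2) + (X 0 * X 2 + X 1 ^ 2)^(k+1)) * v 0 :=
      ⟨-(((k+1:ℕ):S3) * (X 0 * X 2 + X 1 ^ 2)^k
        * (v 0 * X 2 + 2 * v 1 * X 1 + v 2 * X 0)), by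
        linear_combination (norm := (push_cast; ring1)) hv⟩
    have hndP : ¬ ((X 0 : S3) ∣ ((2*k+3:ℕ):S3) * X 0^(2*k+2) + (X 0 * X 2 + X 1 ^ 2)^(k+1)) := by
      apply not_dvd_of_eval ![0,1,0]
      · simp
      · simp
    obtain ⟨u, hu⟩ := ((primeX 0).2.2 _ _ hxdvd).resolve_left hndP
    rw [hu] at hv
    -- step 2 : cancel X 0
    have hG : (u * (((2*k+3:ℕ):S3) * X 0^(2*k+2) + (X 0 * X 2 + X 1 ^ 2)^(k+1))
        + ((k+1:ℕ):S3) * (X 0 * X 2 + X 1 ^ 2)^k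
          * (u * X 0 * X 2 + 2 * X 1 * v 1 + X 0 * v 2)) = 0 := by
      rcases mul_eq_zero.mp (show (X 0 : S3) *
        (u * (((2*k+3:ℕ):S3) * X 0^(2*k+2) + (X 0 * X 2 + X 1 ^ 2)^(k+1))
          + ((k+1:ℕ):S3) * (X 0 * X 2 + X 1 ^ 2)^k
            * (u * X 0 * X 2 + 2 * X 1 * v 1 + X 0 * v 2)) = 0 from by
        linear_combination (norm := (push_cast; ring1)) hv) with h | h
      · exact absurd h (X_ne_zero 0)
      · exact h
    -- step 3 : q^k divides u
    have hqdvd : (X 0 * X 2 + X 1 ^ 2 : S3)^k ∣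
        (((2*k+3:ℕ):S3) * X 0^(2*k+2) + (X 0 * X 2 + X 1 ^ 2)^(k+1)) * u :=
      ⟨-(((k+1:ℕ):S3) * (u * X 0 * X 2 + 2 * X 1 * v 1 + X 0 * v 2)), by
        linear_combination (norm := (push_cast; ring1)) hG⟩
    have hndq : ¬ ((X 0 * X 2 + X 1 ^ 2 : S3) ∣
        ((2*k+3:ℕ):S3) * X 0^(2*k+2) + (X 0 * X 2 + X 1 ^ 2)^(k+1)) := by
      apply not_dvd_of_eval ![1,0,0]
      · simp
      · simp only [map_add, map_mul, map_natCast, map_pow, eval_X, Matrix.cons_val_zero,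
          Matrix.cons_val_one, Matrix.head_cons, Matrix.cons_val_two, Matrix.tail_cons,
          one_pow, mul_one]
        rw [show ((1:ℂ) * 0 + 0 ^ 2) = 0 from by ring, zero_pow (by omega), add_zero]
        exact Nat.cast_ne_zero.mpr (by omega)
    obtain ⟨A, hA⟩ := prime_q.pow_dvd_of_dvd_mul_left k hndq hqdvd
    rw [hA] at hG
    have hE0 : (A * (((2*k+3:ℕ):S3) * X 0^(2*k+2) + (X 0 * X 2 + X 1 ^ 2)^(k+1))
        + ((k+1:ℕ):S3) * (A * X 0 * X 2 * (X 0 * X 2 + X 1 ^ 2)^k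
          + 2 * X 1 * v 1 + X 0 * v 2)) = 0 := by
      rcases mul_eq_zero.mp (show ((X 0 * X 2 + X 1 ^ 2 : S3)^k) *
        (A * (((2*k+3:ℕ):S3) * X 0^(2*k+2) + (X 0 * X 2 + X 1 ^ 2)^(k+1))
          + ((k+1:ℕ):S3) * (A * X 0 * X 2 * (X 0 * X 2 + X 1 ^ 2)^k
            + 2 * X 1 * v 1 + X 0 * v 2)) = 0 from by
        linear_combination (norm := (push_cast; ring1)) hG) with h | h
      · exact absurd h (pow_ne_zero _ prime_q.ne_zero)
      · exact h
    have hkne : ((k+1:ℕ):S3) ≠ 0 := Nat.cast_ne_zero.mpr (by omega)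
    set w1 : S3 := v 1 + C (1/(2*(k:ℂ)+2)) * A * (X 1^(2*k+1)) with hw1def
    set w2 : S3 := v 2 + C (1/(2*(k:ℂ)+2)) * A * (((4*k+6 : ℕ) : S3) * X 0 ^ (2*k+1)
      + 2 * X 2 * SS + ((2*k+2 : ℕ) : S3) * X 2 * (X 0 * X 2 + X 1 ^ 2)^k) with hw2def
    have hw : ((k+1:ℕ):S3) * (2*X 1*w1 + X 0*w2) = 0 := by
      rw [hw1def, hw2def]
      linear_combination (norm := (push_cast; ring1)) hE0
        + (A * (X 1^(2*k+2) + (2*(k:S3)+3) * X 0^(2*k+2) + X 0 * X 2 * SS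
            + ((k:S3)+1) * X 0 * X 2 * (X 0 * X 2 + X 1 ^ 2)^k)) * h2ck
        + A * hgeom
    have hw0 : 2*X 1*w1 + X 0*w2 = 0 := by
      rcases mul_eq_zero.mp hw with h | h
      · exact absurd h hkne
      · exact h
    have hxd : (X 0:S3) ∣ (2*X 1) * w1 := ⟨-w2, by linear_combination hw0⟩
    rcases (primeX 0).2.2 _ _ hxd with h | h
    · exact absurd (h : (X 0:S3) ∣ 2*X 1) (by
        apply not_dvd_of_eval ![0,1,0]
        · simp
        · simp)
    obtain ⟨t, ht⟩ := h
    have hw2 : w2 = -(2*X 1*t) := by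
      rcases mul_eq_zero.mp (show (X 0:S3) * (w2 + 2*X 1*t) = 0 from by
        linear_combination hw0 - 2*X 1*ht) with h | h
      · exact absurd h (X_ne_zero 0)
      · linear_combination h
    refine ⟨t, C (1/(2*(k:ℂ)+2)) * A, ?_⟩
    funext i
    fin_cases i
    · show v 0 = t * 0 + C (1/(2*(k:ℂ)+2)) * A * (((2*k+2 : ℕ) : S3) * X 0
        * (X 0 * X 2 + X 1 ^ 2)^k)
      rw [hu, hA]
      linear_combination (norm := (push_cast; ring1))
        (- X 0 * (X 0 * X 2 + X 1 ^ 2)^k * A) * h2ck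
    · show v 1 = t * X 0 + C (1/(2*(k:ℂ)+2)) * A * (-(X 1^(2*k+1)))
      linear_combination ht - hw1def
    · show v 2 = t * (-(2*X 1)) + C (1/(2*(k:ℂ)+2)) * A
        * (-(((4*k+6 : ℕ) : S3) * X 0 ^ (2*k+1) + 2 * X 2 * SS
          + ((2*k+2 : ℕ) : S3) * X 2 * (X 0 * X 2 + X 1 ^ 2)^k))
      linear_combination hw2 - hw2def
  obtain ⟨B, hB0, hB1⟩ := basis_of_pair _ _ h1 h2 rfl rfl
    (mul_ne_zero (mul_ne_zero (Nat.cast_ne_zero.mpr (by omega)) (X_ne_zero 0))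
      (pow_ne_zero _ prime_q.ne_zero)) hspan
  refine ⟨B, ?_, ?_⟩
  · intro i
    rw [hB0]
    fin_cases i
    · exact isHomogeneous_zero _ _ _
    · exact isHomogeneous_X _ _
    · show IsHomogeneous (-(2 * X 1) : S3) 1
      rw [two_eq_C]
      exact ((isHomogeneous_X ℂ (1 : Fin 3)).C_mul (2:ℂ)).neg
  · intro i
    rw [hB1]
    fin_cases i
    · show IsHomogeneous (((2*k+2 : ℕ) : S3) * X 0 * (X 0 * X 2 + X 1 ^ 2)^k) (2*k+1)
      rw [cast_eq_C]
      have ha : IsHomogeneous (C ((2*k+2:ℕ):ℂ) * X 0 * (X 0 * X 2 + X 1 ^ 2)^k : S3)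
          (1 + 2*k) := ((isHomogeneous_X ℂ (0:Fin 3)).C_mul _).mul (hq2.pow k)
      rwa [show 1 + 2*k = 2*k+1 from by omega] at ha
    · show IsHomogeneous (-(X 1 ^ (2*k+1)) : S3) (2*k+1)
      have ha : IsHomogeneous ((X 1:S3) ^ (2*k+1)) (1*(2*k+1)) :=
        (isHomogeneous_X ℂ (1:Fin 3)).pow (2*k+1)
      rw [one_mul] at ha
      exact ha.neg
    · show IsHomogeneous (-(((4*k+6 : ℕ) : S3) * X 0 ^ (2*k+1) + 2 * X 2 * SS
        + ((2*k+2 : ℕ) : S3) * X 2 * (X 0 * X 2 + X 1 ^ 2)^k) : S3) (2*k+1)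
      rw [two_eq_C, cast_eq_C (4*k+6), cast_eq_C (2*k+2)]
      have ha : IsHomogeneous (C ((4*k+6:ℕ):ℂ) * X 0 ^ (2*k+1) : S3) (1*(2*k+1)) :=
        ((isHomogeneous_X ℂ (0:Fin 3)).pow (2*k+1)).C_mul _
      rw [one_mul] at ha
      have hb : IsHomogeneous (C (2:ℂ) * X 2 * SS : S3) (1 + 2*k) :=
        ((isHomogeneous_X ℂ (2:Fin 3)).C_mul _).mul hSSh
      rw [show 1 + 2*k = 2*k+1 from by omega] at hb
      have hc : IsHomogeneous (C ((2*k+2:ℕ):ℂ) * X 2 * (X 0 * X 2 + X 1 ^ 2)^k : S3)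
          (1 + 2*k) := ((isHomogeneous_X ℂ (2:Fin 3)).C_mul _).mul (hq2.pow k)
      rw [show 1 + 2*k = 2*k+1 from by omega] at hc
      exact ((ha.add hb).add hc).neg

theorem stmt4 (d m : ℕ) (f : MvPolynomial (Fin 3) ℂ) (hd : 3 ≤ d)
    (hf : (d = 2 * m ∧ 2 ≤ m ∧ f = X 0 ^ (2 * m) + (X 0 * X 2 + X 1 ^ 2) ^ m) ∨
          (d = 2 * m + 1 ∧ 1 ≤ m ∧ f = X 0 * (X 0 ^ (2 * m) + (X 0 * X 2 + X 1 ^ 2) ^ m))) :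
    ∃ B : Module.Basis (Fin 2) (MvPolynomial (Fin 3) ℂ) (AR f),
      (∀ i, ((B 0).1 i).IsHomogeneous 1) ∧ (∀ i, ((B 1).1 i).IsHomogeneous (d - 2)) := by
  rcases hf with ⟨hd2, hm, hfe⟩ | ⟨hd2, hm, hfe⟩
  · obtain ⟨k, rfl⟩ : ∃ k, m = k + 2 := ⟨m - 2, by omega⟩
    have hfe' : f = X 0 ^ (2*k+4) + (X 0 * X 2 + X 1 ^ 2) ^ (k+2) := by
      rw [hfe, show 2*(k+2) = 2*k+4 from by ring]
    subst hfe'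
    obtain ⟨B, hB0, hB1⟩ := even_case k
    refine ⟨B, hB0, ?_⟩
    rw [show d - 2 = 2*k+2 from by omega]
    exact hB1
  · obtain ⟨k, rfl⟩ : ∃ k, m = k + 1 := ⟨m - 1, by omega⟩
    have hfe' : f = X 0 * (X 0 ^ (2*k+2) + (X 0 * X 2 + X 1 ^ 2) ^ (k+1)) := by
      rw [hfe, show 2*(k+1) = 2*k+2 from by ring]
    subst hfe'
    obtain ⟨B, hB0, hB1⟩ := odd_case k
    refine ⟨B, hB0, ?_⟩
    rw [show d - 2 = 2*k+1 from by omega]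
    exact hB1
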